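/- Let ℓ > 0 and let k_a, k_v, k_p, h_w, τ₀ be positive real numbers with γ := k_v + h_w k_p satisfying γ − τ₀ k_p > 0. If for every τ ∈ (0, τ₀] and every ω ≥ 0 one has |−k_a ω² e^{−iωℓ} + i k_v ω + k_p| ≤ |−iτω³ − ω² + iγω + k_p|, then k_a < 1. -/

import Mathlib

theorem string_stability_implies_ka_lt_one (ka ℓ kv kp hw τ₀ : ℝ)
    (hℓ : 0 < ℓ) (hka : 0 < ka) (hkv : 0 < kv) (hkp : 0 < kp) (hhw : 0 < hw) (hτ₀ : 0 < τ₀)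
    (γ : ℝ) (hγ : γ = kv + hw * kp) (hint : γ - τ₀ * kp > 0)
    (hss : ∀ τ : ℝ, 0 < τ → τ ≤ τ₀ → ∀ ω : ℝ, 0 ≤ ω →
      ‖(-(ka : ℂ) * (ω : ℂ)^2 * Complex.exp (-(Complex.I * (ω : ℂ) * (ℓ : ℂ)))
          + Complex.I * (kv : ℂ) * (ω : ℂ) + (kp : ℂ))‖
        ≤ ‖(-(Complex.I * (τ : ℂ) * (ω : ℂ)^3) - (ω : ℂ)^2
          + Complex.I * (γ : ℂ) * (ω : ℂ) + (kp : ℂ))‖) :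
    ka < 1 := by
  have hγ0 : 0 < γ := by nlinarith
  -- choose a big odd multiple of π/ℓ
  set B : ℝ := max (Real.sqrt (γ / τ₀)) (Real.sqrt kp) with hB
  obtain ⟨n, hn⟩ := exists_nat_gt (B * ℓ / Real.pi)
  set ω : ℝ := (2 * n + 1) * Real.pi / ℓ with hω
  have hπ : (0:ℝ) < Real.pi := Real.pi_pos
  have hω0 : 0 < ω := by
    apply div_pos _ hℓ
    positivity
  have hωB : B < ω := by
    have h1 : B * ℓ / Real.pi < (n:ℝ) := hn
    have h2 : (n:ℝ) ≤ 2 * n + 1 := by push_cast; linarith [Nat.cast_nonneg (α := ℝ) n]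
    have : B * ℓ / Real.pi < 2 * n + 1 := lt_of_lt_of_le h1 h2
    rw [div_lt_iff₀ hπ] at this
    rw [hω, lt_div_iff₀ hℓ]
    nlinarith
  have hB1 : Real.sqrt (γ / τ₀) ≤ B := le_max_left _ _
  have hB2 : Real.sqrt kp ≤ B := le_max_right _ _
  have hωsq1 : γ / τ₀ ≤ ω ^ 2 := by
    have := Real.sqrt_le_sqrt (le_of_lt (lt_of_le_of_lt hB1 hωB))
    nlinarith [Real.sq_sqrt (le_of_lt (div_pos hγ0 hτ₀)), lt_of_le_of_lt hB1 hωB,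
      Real.sqrt_nonneg (γ / τ₀)]
  have hωsq2 : kp < ω ^ 2 := by
    nlinarith [Real.sq_sqrt hkp.le, lt_of_le_of_lt hB2 hωB, Real.sqrt_nonneg kp]
  set τ : ℝ := γ / ω ^ 2 with hτ
  have hτ0 : 0 < τ := div_pos hγ0 (by positivity)
  have hτle : τ ≤ τ₀ := by
    rw [hτ, div_le_iff₀ (by positivity : (0:ℝ) < ω ^ 2)]
    rw [div_le_iff₀ hτ₀] at hωsq1
    nlinarith
  have key := hss τ hτ0 hτle ω hω0.le
  -- exp(-I ω ℓ) = -1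
  have hωℓ : ω * ℓ = (2 * n + 1) * Real.pi := by
    rw [hω, div_mul_cancel₀ _ hℓ.ne']
  have hexp : Complex.exp (-(Complex.I * (ω : ℂ) * (ℓ : ℂ))) = -1 := by
    have : Complex.I * (ω : ℂ) * (ℓ : ℂ) = ((2 * n + 1 : ℕ) : ℂ) * (Real.pi * Complex.I) := by
      have : ((ω : ℂ) * (ℓ : ℂ)) = ((2 * n + 1 : ℕ) : ℂ) * (Real.pi : ℂ) := by
        push_cast
        exact_mod_cast congrArg (Complex.ofReal) hωℓ
      push_cast at this ⊢
      rw [mul_assoc, this]; ring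
    rw [this, show -(((2 * n + 1 : ℕ) : ℂ) * ((Real.pi : ℂ) * Complex.I))
        = ((2 * n + 1 : ℕ) : ℂ) * (-((Real.pi : ℂ) * Complex.I)) by ring,
      Complex.exp_nat_mul]
    have h1 : Complex.exp (-((Real.pi : ℂ) * Complex.I)) = -1 := by
      rw [Complex.exp_neg, Complex.exp_pi_mul_I]
      norm_num
    rw [h1, Odd.neg_one_pow ⟨n, by ring⟩]
  -- numerator lower bound
  have hlhs : ka * ω ^ 2 + kp ≤
      ‖(-(ka : ℂ) * (ω : ℂ)^2 * Complex.exp (-(Complex.I * (ω : ℂ) * (ℓ : ℂ)))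
          + Complex.I * (kv : ℂ) * (ω : ℂ) + (kp : ℂ))‖ := by
    rw [hexp]
    have hre : (-(ka : ℂ) * (ω : ℂ)^2 * (-1)
          + Complex.I * (kv : ℂ) * (ω : ℂ) + (kp : ℂ)).re = ka * ω ^ 2 + kp := by
      have h2 : -(ka : ℂ) * (ω : ℂ)^2 * (-1) + Complex.I * (kv : ℂ) * (ω : ℂ) + (kp : ℂ)
          = ((ka * ω ^ 2 + kp : ℝ) : ℂ) + ((kv * ω : ℝ) : ℂ) * Complex.I := by
        push_cast; ring
      rw [h2]
      simp [← Complex.ofReal_pow]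
    calc ka * ω ^ 2 + kp = (-(ka : ℂ) * (ω : ℂ)^2 * (-1)
          + Complex.I * (kv : ℂ) * (ω : ℂ) + (kp : ℂ)).re := hre.symm
      _ ≤ _ := Complex.re_le_norm _
  -- denominator value
  have hτω : τ * ω ^ 3 = γ * ω := by
    rw [hτ]; field_simp
  have hrhs : ‖(-(Complex.I * (τ : ℂ) * (ω : ℂ)^3) - (ω : ℂ)^2
          + Complex.I * (γ : ℂ) * (ω : ℂ) + (kp : ℂ))‖ = ω ^ 2 - kp := by
    have hc : ((τ : ℂ) * (ω : ℂ)^3) = (γ : ℂ) * (ω : ℂ) := by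
      exact_mod_cast congrArg (Complex.ofReal) hτω
    have : -(Complex.I * (τ : ℂ) * (ω : ℂ)^3) - (ω : ℂ)^2
          + Complex.I * (γ : ℂ) * (ω : ℂ) + (kp : ℂ) = ((kp - ω ^ 2 : ℝ) : ℂ) := by
      push_cast
      rw [mul_assoc, hc]; ring
    rw [this, Complex.norm_real, Real.norm_eq_abs, abs_of_nonpos (by linarith)]
    ring
  rw [hrhs] at key
  have : ka * ω ^ 2 + kp ≤ ω ^ 2 - kp := le_trans hlhs key
  nlinarith [sq_nonneg ω]
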